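/- Let q ≥ 1, n ≥ 1 and A ≥ 0 be integers, and define J_A := {(j_1,…,j_n) ∈ ℤ^n : 1 ≤ j_k ≤ q for all k, and for every k ∈ {1,…,n}, Σ_{s≠k} ⌈(j_k − j_s)/(q+1)⌉ − j_k ≥ A − (q−n)}. Then J_A equals the union, over all permutations σ of {1,…,n}, of the sets σ(B_{q−A}), where B_t := {(j_1,…,j_n) ∈ ℤ^n : 1 ≤ j_k ≤ t−k for all k} and σ(B_t) := {(j_{σ(1)},…,j_{σ(n)}) : (j_1,…,j_n) ∈ B_t}. -/

import Mathlib

open Finset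

lemma ceil_ind (q a b : ℤ) (hq : 1 ≤ q) (ha1 : 1 ≤ a) (haq : a ≤ q)
    (hb1 : 1 ≤ b) (hbq : b ≤ q) :
    ⌈((a:ℚ) - (b:ℚ)) / ((q:ℚ) + 1)⌉ = if b < a then 1 else 0 := by
  have hq1 : (0:ℚ) < (q:ℚ) + 1 := by
    have : (1:ℚ) ≤ (q:ℚ) := by exact_mod_cast hq
    linarith
  split_ifs with h
  · rw [Int.ceil_eq_iff]
    constructor
    · have : (0:ℚ) < (a:ℚ) - b := by
        have : (b:ℚ) < a := by exact_mod_cast h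
        linarith
      push_cast
      have := div_pos this hq1
      linarith
    · push_cast
      rw [div_le_one hq1]
      have : (a:ℚ) ≤ q := by exact_mod_cast haq
      have : (1:ℚ) ≤ (b:ℚ) := by exact_mod_cast hb1
      linarith
  · rw [Int.ceil_eq_iff]
    push_neg at h
    constructor
    · push_cast
      rw [lt_div_iff₀ hq1]
      have : (1:ℚ) ≤ (a:ℚ) := by exact_mod_cast ha1
      have : (b:ℚ) ≤ q := by exact_mod_cast hbq
      linarith
    · push_cast
      apply div_nonpos_of_nonpos_of_nonneg _ (le_of_lt hq1)
      have : (a:ℚ) ≤ b := by exact_mod_cast h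
      linarith

/-- The key reformulation: for `j` in range, the sum condition at `k` is equivalent to
`#{s : j k ≤ j s} ≤ q - A - j k`. -/
lemma sum_eq_count {n : ℕ} (q : ℤ) (hq : 1 ≤ q) (j : Fin n → ℤ)
    (hbd : ∀ k, 1 ≤ j k ∧ j k ≤ q) (k : Fin n) :
    (∑ s ∈ Finset.univ.erase k, ⌈((j k : ℚ) - (j s : ℚ)) / ((q : ℚ) + 1)⌉)
      = ((Finset.univ.filter (fun s => j s < j k)).card : ℤ) := by
  have : ∀ s ∈ Finset.univ.erase k, ⌈((j k : ℚ) - (j s : ℚ)) / ((q : ℚ) + 1)⌉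
      = if j s < j k then 1 else 0 := by
    intro s _
    exact ceil_ind q (j k) (j s) hq (hbd k).1 (hbd k).2 (hbd s).1 (hbd s).2
  rw [Finset.sum_congr rfl this, Finset.sum_boole]
  congr 1
  rw [Finset.filter_erase]
  rw [Finset.erase_eq_of_notMem]
  simp

/-- For integers `q ≥ 1`, `n ≥ 1`, `A ≥ 0`, the set `J_A` equals the union
over all permutations `σ` of `σ(B_{q-A})`, where
`B_t = {j ∈ ℤ^n | 1 ≤ j_k ≤ t-k for all k}`. -/
theorem stmt_7 (q A : ℤ) (hq : 1 ≤ q) (hA : 0 ≤ A) (n : ℕ) (hn : 1 ≤ n) :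
    {j : Fin n → ℤ | (∀ k, 1 ≤ j k ∧ j k ≤ q) ∧ ∀ k : Fin n,
        (∑ s ∈ Finset.univ.erase k, ⌈((j k : ℚ) - (j s : ℚ)) / ((q : ℚ) + 1)⌉) - j k
          ≥ A - (q - (n : ℤ))}
      = ⋃ σ : Equiv.Perm (Fin n), (fun j => j ∘ σ) ''
          {j : Fin n → ℤ | ∀ k : Fin n, 1 ≤ j k ∧ j k ≤ (q - A) - ((k.val : ℤ) + 1)} := by
  ext j
  simp only [Set.mem_setOf_eq, Set.mem_iUnion, Set.mem_image]
  -- count identity: #{s : j s < j k} + #{s : j k ≤ j s} = n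
  have hcount : ∀ k : Fin n,
      (Finset.univ.filter (fun s => j s < j k)).card
        + (Finset.univ.filter (fun s => j k ≤ j s)).card = n := by
    intro k
    have := Finset.card_filter_add_card_filter_not
      (s := (Finset.univ : Finset (Fin n))) (fun s => j s < j k)
    simpa [not_lt] using this
  constructor
  · rintro ⟨hbd, hsum⟩
    -- derive: ∀ k, #{s : j k ≤ j s} ≤ q - A - j k
    have hge : ∀ k : Fin n,
        ((Finset.univ.filter (fun s => j k ≤ j s)).card : ℤ) ≤ q - A - j k := by
      intro k
      have h1 := hsum k
      rw [sum_eq_count q hq j hbd k] at h1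
      have h2 := hcount k
      have h2' : ((Finset.univ.filter (fun s => j s < j k)).card : ℤ)
          + ((Finset.univ.filter (fun s => j k ≤ j s)).card : ℤ) = n := by
        exact_mod_cast h2
      linarith
    -- sort j decreasingly
    set τ := Tuple.sort (fun k => -j k) with hτ
    have hmono : Monotone ((fun k => -j k) ∘ τ) := Tuple.monotone_sort _
    refine ⟨τ⁻¹, j ∘ τ, ?_, ?_⟩
    · intro k
      refine ⟨(hbd (τ k)).1, ?_⟩
      -- j (τ k) ≤ q - A - (k+1); have #{s : j (τ k) ≤ j s} ≤ q - A - j (τ k)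
      -- and k + 1 ≤ #{s : j (τ k) ≤ j s}
      have hcard : k.val + 1 ≤ (Finset.univ.filter (fun s => j (τ k) ≤ j s)).card := by
        have : (Finset.Iic k).card ≤
            (Finset.univ.filter (fun s => j (τ k) ≤ j s)).card := by
          apply Finset.card_le_card_of_injOn τ
          · intro i hi
            simp only [Finset.mem_coe, Finset.mem_Iic] at hi
            simp only [Finset.mem_coe, Finset.mem_filter, Finset.mem_univ, true_and]
            have := hmono hi
            simpa using this
          · exact τ.injective.injOn
        simpa [Fin.card_Iic] using this
      have := hge (τ k)
      have hc : ((k.val : ℤ) + 1) ≤ ((Finset.univ.filter (fun s => j (τ k) ≤ j s)).card : ℤ) := by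
        exact_mod_cast hcard
      simp only [Function.comp_apply]
      linarith
    · funext k
      simp
  · rintro ⟨σ, w, hw, rfl⟩
    have hbd : ∀ k, 1 ≤ (w ∘ σ) k ∧ (w ∘ σ) k ≤ q := by
      intro k
      refine ⟨(hw (σ k)).1, ?_⟩
      have h2 := (hw (σ k)).2
      have : (0:ℤ) ≤ ((σ k).val : ℤ) := Int.ofNat_nonneg _
      simp only [Function.comp_apply]
      linarith
    refine ⟨hbd, ?_⟩
    intro k
    rw [sum_eq_count q hq _ hbd k]
    -- need: #{s : w(σ k) ≤ w(σ s)} ≤ q - A - w (σ k)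
    set m : ℤ := q - A - (w ∘ σ) k with hm
    have hm1 : ((σ k).val : ℤ) + 1 ≤ m := by
      have := (hw (σ k)).2
      simp only [hm, Function.comp_apply]
      linarith
    have hm0 : 1 ≤ m := by
      have : (0:ℤ) ≤ ((σ k).val : ℤ) := Int.ofNat_nonneg _
      linarith
    have hcard : ((Finset.univ.filter (fun s => (w ∘ σ) k ≤ (w ∘ σ) s)).card : ℤ) ≤ m := by
      have hle : (Finset.univ.filter (fun s => (w ∘ σ) k ≤ (w ∘ σ) s)).card
          ≤ (Finset.range m.toNat).card := by
        apply Finset.card_le_card_of_injOn (fun s => (σ s).val)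
        · intro s hs
          simp only [Finset.mem_coe, Finset.mem_filter, Finset.mem_univ, true_and, Function.comp_apply] at hs
          simp only [Finset.mem_coe, Finset.mem_range]
          have h2 := (hw (σ s)).2
          have h3 : ((σ s).val : ℤ) + 1 ≤ m := by
            simp only [hm, Function.comp_apply]
            linarith
          have : ((σ s).val : ℤ) < (m.toNat : ℤ) := by
            rw [Int.toNat_of_nonneg (by linarith)]
            linarith
          exact_mod_cast this
        · intro a _ b _ hab
          exact σ.injective (Fin.val_injective hab)
      rw [Finset.card_range] at hle
      calc ((Finset.univ.filter (fun s => (w ∘ σ) k ≤ (w ∘ σ) s)).card : ℤ)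
          ≤ (m.toNat : ℤ) := by exact_mod_cast hle
        _ = m := Int.toNat_of_nonneg (by linarith)
    have h2 := hcount k
    have h2' : ((Finset.univ.filter (fun s => (w ∘ σ) s < (w ∘ σ) k)).card : ℤ)
        + ((Finset.univ.filter (fun s => (w ∘ σ) k ≤ (w ∘ σ) s)).card : ℤ) = n := by
      exact_mod_cast h2
    linarith
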